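/- arXiv:1903.01486 — 2 statements merged into one kernel-verified Lean document; each statement's English description precedes it below -/
import Mathlib

section
/- For s ∈ (0, 1), define E(s) = min over θ ∈ [0, π] of e_s(θ), where e_s(θ) = −s·sin²θ − (1 − s)·cosθ. Then E(s) = −(1 − s) for s ∈ (0, 1/3], E(s) = −s − (1 − s)²/(4s) for s ∈ [1/3, 1), and E is differentiable at every point of (0, 1) (in particular at s = 1/3, where both one-sided derivatives equal 1); i.e. the ground-state energy of the p = 2 ferromagnetic p-spin model in the thermodynamic limit has a continuous first derivative, so the quantum phase transition is of second (not first) order. -/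
lemma p2_least_A (s : ℝ) (hs0 : 0 < s) (hs : s ≤ 1/3) :
    IsLeast ((fun θ : ℝ => -s * Real.sin θ ^ 2 - (1 - s) * Real.cos θ) ''
      Set.Icc 0 Real.pi) (-(1 - s)) := by
  constructor
  · exact ⟨0, ⟨le_refl 0, Real.pi_nonneg⟩, by simp⟩
  · rintro y ⟨θ, hθ, rfl⟩
    dsimp only
    have hsin : Real.sin θ ^ 2 = 1 - Real.cos θ ^ 2 := Real.sin_sq θ
    nlinarith [Real.cos_le_one θ, Real.neg_one_le_cos θ,
      mul_nonneg (sub_nonneg.2 (Real.cos_le_one θ))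
        (show (0:ℝ) ≤ 1 - 2*s - s * Real.cos θ by
          nlinarith [Real.cos_le_one θ])]

lemma p2_least_B (s : ℝ) (hs : 1/3 ≤ s) (hs1 : s < 1) :
    IsLeast ((fun θ : ℝ => -s * Real.sin θ ^ 2 - (1 - s) * Real.cos θ) ''
      Set.Icc 0 Real.pi) (-s - (1 - s) ^ 2 / (4 * s)) := by
  have hs0 : 0 < s := by linarith
  set c : ℝ := (1 - s) / (2 * s) with hc
  have hc0 : 0 ≤ c := div_nonneg (by linarith) (by linarith)
  have hc1 : c ≤ 1 := by rw [hc, div_le_one (by linarith)]; linarith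
  have hcm1 : -1 ≤ c := by linarith
  constructor
  · refine ⟨Real.arccos c, ⟨Real.arccos_nonneg c, Real.arccos_le_pi c⟩, ?_⟩
    have hcos : Real.cos (Real.arccos c) = c := Real.cos_arccos hcm1 hc1
    have hsin : Real.sin (Real.arccos c) ^ 2 = 1 - c ^ 2 := by
      rw [Real.sin_sq, hcos]
    simp only [hsin, hcos]
    rw [hc]
    field_simp
    ring
  · rintro y ⟨θ, hθ, rfl⟩
    dsimp only
    have hsin : Real.sin θ ^ 2 = 1 - Real.cos θ ^ 2 := Real.sin_sq θ
    have hdiv : (1 - s) ^ 2 / (4 * s) * (4 * s) = (1 - s) ^ 2 := by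
      field_simp
    nlinarith [sq_nonneg (2 * s * Real.cos θ - (1 - s)), hs0, hdiv,
      sq_nonneg (Real.cos θ)]

/-- Let E(s) = min_{θ ∈ [0,π]} (−s·sin²θ − (1−s)·cosθ). Then
E(s) = −(1−s) on (0, 1/3], E(s) = −s − (1−s)²/(4s) on [1/3, 1), E is differentiable
on (0,1), and at s = 1/3 both one-sided derivatives equal 1: the p = 2 ground-state
energy has continuous first derivative (second order QPT). -/
theorem p2_spin_second_order_QPT (E : ℝ → ℝ)
    (hE : ∀ s : ℝ, E s =
      sInf ((fun θ : ℝ => -s * Real.sin θ ^ 2 - (1 - s) * Real.cos θ) ''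
        Set.Icc 0 Real.pi)) :
    (∀ s ∈ Set.Ioc (0 : ℝ) (1 / 3), E s = -(1 - s)) ∧
    (∀ s ∈ Set.Ico (1 / 3 : ℝ) 1, E s = -s - (1 - s) ^ 2 / (4 * s)) ∧
    (∀ s ∈ Set.Ioo (0 : ℝ) 1, DifferentiableAt ℝ E s) ∧
    HasDerivWithinAt E 1 (Set.Iic (1 / 3)) (1 / 3) ∧
    HasDerivWithinAt E 1 (Set.Ici (1 / 3)) (1 / 3) := by
  have hA : ∀ s ∈ Set.Ioc (0 : ℝ) (1 / 3), E s = -(1 - s) := by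
    intro s hs
    rw [hE s, (p2_least_A s hs.1 hs.2).csInf_eq]
  have hB : ∀ s ∈ Set.Ico (1 / 3 : ℝ) 1, E s = -s - (1 - s) ^ 2 / (4 * s) := by
    intro s hs
    rw [hE s, (p2_least_B s hs.1 hs.2).csInf_eq]
  -- derivative facts for the two branch functions
  have hlin : HasDerivAt (fun s : ℝ => -(1 - s)) 1 (1/3 : ℝ) := by
    exact ((hasDerivAt_id' (1/3 : ℝ)).const_sub (1:ℝ)).fun_neg.congr_deriv (by norm_num)
  have hg : ∀ x : ℝ, x ≠ 0 →
      HasDerivAt (fun s : ℝ => -s - (1 - s) ^ 2 / (4 * s))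
        (-1 - ((2 * (1 - x) * (-1)) * (4 * x) - (1 - x) ^ 2 * 4) / (4 * x) ^ 2) x := by
    intro x hx
    have hu : HasDerivAt (fun s : ℝ => (1 - s) ^ 2) (2 * (1 - x) * (-1)) x := by
      have h1 : HasDerivAt (fun s : ℝ => 1 - s) (-1) x := by
        exact (hasDerivAt_id' x).const_sub (1:ℝ)
      exact (h1.fun_pow 2).congr_deriv (by norm_num)
    have hv : HasDerivAt (fun s : ℝ => 4 * s) 4 x := by
      simpa using (hasDerivAt_id x).const_mul (4 : ℝ)
    have hdiv := hu.div hv (by simpa using hx)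
    exact (hasDerivAt_id' x).neg.sub hdiv
  have hg13 : HasDerivAt (fun s : ℝ => -s - (1 - s) ^ 2 / (4 * s)) 1 (1/3 : ℝ) := by
    have := hg (1/3) (by norm_num)
    convert this using 1
    norm_num
  -- one-sided derivatives at 1/3
  have hIic : HasDerivWithinAt E 1 (Set.Iic (1 / 3)) (1 / 3) := by
    have h0 : ∀ᶠ t in nhdsWithin (1/3 : ℝ) (Set.Iic (1/3)), (0:ℝ) < t :=
      eventually_nhdsWithin_of_eventually_nhds
        ((isOpen_Ioi.eventually_mem (show (1/3:ℝ) ∈ Set.Ioi 0 by norm_num)))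
    have heq : E =ᶠ[nhdsWithin (1/3 : ℝ) (Set.Iic (1/3))] (fun s => -(1 - s)) := by
      filter_upwards [h0, self_mem_nhdsWithin] with t ht0 htle
      exact hA t ⟨ht0, htle⟩
    exact (hlin.hasDerivWithinAt).congr_of_eventuallyEq heq
      (hA (1/3) ⟨by norm_num, le_refl _⟩)
  have hIci : HasDerivWithinAt E 1 (Set.Ici (1 / 3)) (1 / 3) := by
    have h0 : ∀ᶠ t in nhdsWithin (1/3 : ℝ) (Set.Ici (1/3)), t < (1:ℝ) :=
      eventually_nhdsWithin_of_eventually_nhds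
        ((isOpen_Iio.eventually_mem (show (1/3:ℝ) ∈ Set.Iio 1 by norm_num)))
    have heq : E =ᶠ[nhdsWithin (1/3 : ℝ) (Set.Ici (1/3))]
        (fun s => -s - (1 - s) ^ 2 / (4 * s)) := by
      filter_upwards [h0, self_mem_nhdsWithin] with t ht1 htge
      exact hB t ⟨htge, ht1⟩
    exact (hg13.hasDerivWithinAt).congr_of_eventuallyEq heq
      (hB (1/3) ⟨le_refl _, by norm_num⟩)
  refine ⟨hA, hB, ?_, hIic, hIci⟩
  intro s hs
  rcases lt_trichotomy s (1/3) with h | h | h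
  · have hmem : s ∈ Set.Ioo (0:ℝ) (1/3) := ⟨hs.1, h⟩
    have heq : E =ᶠ[nhds s] (fun t => -(1 - t)) := by
      filter_upwards [isOpen_Ioo.eventually_mem hmem] with t ht
      exact hA t ⟨ht.1, le_of_lt ht.2⟩
    exact heq.differentiableAt_iff.2 (by fun_prop)
  · subst h
    have : HasDerivAt E 1 (1/3 : ℝ) := by
      have := hIic.union hIci
      rwa [Set.Iic_union_Ici, hasDerivWithinAt_univ] at this
    exact this.differentiableAt
  · have hmem : s ∈ Set.Ioo (1/3 : ℝ) 1 := ⟨h, hs.2⟩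
    have heq : E =ᶠ[nhds s] (fun t => -t - (1 - t) ^ 2 / (4 * t)) := by
      filter_upwards [isOpen_Ioo.eventually_mem hmem] with t ht
      exact hB t ⟨le_of_lt ht.1, ht.2⟩
    have hs0 : s ≠ 0 := ne_of_gt hs.1
    exact heq.differentiableAt_iff.2 ((hg s hs0).differentiableAt)
end

section
/- For s ∈ [0, 1], define e_s : [−1, 1] → ℝ by e_s(m) = −s·m⁵ − (1 − s)·√(1 − m²). Then there exists s* ∈ (0, 1) and two distinct points m₁ ≠ m₂ in [−1, 1] such that e_{s*} attains its global minimum on [−1, 1] at both m₁ and m₂; i.e. at the transition point the classical energy of the ferromagnetic p-spin model with p = 5 has (at least) two distinct global minimizers, so the global minimizer is discontinuous in s and the quantum phase transition is first order. -/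
open Set

private lemma sqrt_bound' {m : ℝ} (h1 : -1 ≤ m) (h2 : m ≤ 1) :
    Real.sqrt (1 - m ^ 2) ≤ 1 - m ^ 2 / 2 := by
  have h := Real.sqrt_le_sqrt (show 1 - m ^ 2 ≤ (1 - m ^ 2 / 2) ^ 2 by nlinarith)
  rwa [Real.sqrt_sq (by nlinarith)] at h

noncomputable def Efun (t m : ℝ) : ℝ := -t * m ^ 5 - (1 - t) * Real.sqrt (1 - m ^ 2)

lemma Efun_zero (t : ℝ) : Efun t 0 = -(1 - t) := by
  simp [Efun]

set_option maxHeartbeats 1000000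

/-- For the p = 5 ferromagnetic p-spin classical energy
e_s(m) = −s·m⁵ − (1−s)·√(1−m²) on [−1,1], there exist s* ∈ (0,1) and two distinct
points m₁ ≠ m₂ in [−1,1] at which e_{s*} attains its global minimum on [−1,1]:
the transition is first order (two coexisting global minima). -/
theorem p5_spin_first_order_QPT :
    ∃ s ∈ Set.Ioo (0 : ℝ) 1, ∃ m₁ ∈ Set.Icc (-1 : ℝ) 1, ∃ m₂ ∈ Set.Icc (-1 : ℝ) 1,
      m₁ ≠ m₂ ∧
      (∀ m ∈ Set.Icc (-1 : ℝ) 1,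
        -s * m₁ ^ 5 - (1 - s) * Real.sqrt (1 - m₁ ^ 2) ≤
          -s * m ^ 5 - (1 - s) * Real.sqrt (1 - m ^ 2)) ∧
      (∀ m ∈ Set.Icc (-1 : ℝ) 1,
        -s * m₂ ^ 5 - (1 - s) * Real.sqrt (1 - m₂ ^ 2) ≤
          -s * m ^ 5 - (1 - s) * Real.sqrt (1 - m ^ 2)) := by
  -- S = set of s ≥ 0 for which m = 0 is a global minimizer (rearranged form)
  set S : Set ℝ := {s | 0 ≤ s ∧ ∀ m ∈ Set.Icc (-1:ℝ) 1,
      s * m ^ 5 ≤ (1 - s) * (1 - Real.sqrt (1 - m ^ 2))} with hSdef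
  have hsq1 : ∀ m ∈ Set.Icc (-1:ℝ) 1, Real.sqrt (1 - m ^ 2) ≤ 1 := by
    intro m hm
    have := sqrt_bound' hm.1 hm.2
    nlinarith [sq_nonneg m]
  have h13 : (1/3 : ℝ) ∈ S := by
    refine ⟨by norm_num, ?_⟩
    intro m hm
    have hb := sqrt_bound' hm.1 hm.2
    have hnn := Real.sqrt_nonneg (1 - m ^ 2)
    have h1' := hsq1 m hm
    rcases le_or_gt m 0 with h | h
    · have hm5 : m ^ 5 ≤ 0 := by nlinarith [mul_nonneg (neg_nonneg.2 h) (sq_nonneg (m ^ 2))]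
      nlinarith
    · have hm3 : m ^ 3 ≤ 1 := by nlinarith [hm.2, mul_pos h h]
      have hm5 : m ^ 5 ≤ m ^ 2 := by nlinarith [mul_nonneg (sq_nonneg m) (sub_nonneg.2 hm3)]
      nlinarith
  have hSne : S.Nonempty := ⟨_, h13⟩
  have hbdd : BddAbove S := by
    refine ⟨1/2, fun s hs => ?_⟩
    have h := hs.2 1 ⟨by norm_num, le_rfl⟩
    norm_num at h
    linarith
  set t : ℝ := sSup S with htdef
  have hlb : (1/3 : ℝ) ≤ t := le_csSup hbdd h13
  have hub : t ≤ 1/2 := csSup_le hSne (fun s hs => by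
    have h := hs.2 1 ⟨by norm_num, le_rfl⟩
    norm_num at h
    linarith)
  -- the condition holds at t itself
  have htcond : ∀ m ∈ Set.Icc (-1:ℝ) 1,
      t * m ^ 5 ≤ (1 - t) * (1 - Real.sqrt (1 - m ^ 2)) := by
    intro m hm
    set a : ℝ := 1 - Real.sqrt (1 - m ^ 2) with hadef
    have ha : 0 ≤ a := by rw [hadef]; linarith [hsq1 m hm]
    set c : ℝ := m ^ 5 + a with hcdef
    have key : t * c ≤ a := by
      rcases le_or_gt c 0 with hc | hc
      · have : t * c ≤ 0 := mul_nonpos_of_nonneg_of_nonpos (by linarith) hc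
        linarith
      · have hle : t ≤ a / c := csSup_le hSne (fun s hs => by
          have h := hs.2 m hm
          rw [le_div_iff₀ hc]
          nlinarith)
        calc t * c ≤ (a / c) * c := by nlinarith
          _ = a := by field_simp
    nlinarith
  -- global minimality of 0 at s = t
  have hmin0 : ∀ m ∈ Set.Icc (-1:ℝ) 1, Efun t 0 ≤ Efun t m := by
    intro m hm
    have h := htcond m hm
    rw [Efun_zero]
    simp only [Efun]
    nlinarith
  -- second minimizer in [0.69, 1]
  have hcont : Continuous (Efun t) := by
    apply Continuous.sub
    · fun_prop
    · exact Continuous.mul (by fun_prop) (Real.continuous_sqrt.comp (by fun_prop))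
  obtain ⟨m₂, hm₂K, hmin⟩ := (isCompact_Icc : IsCompact (Icc (69/100:ℝ) 1)).exists_isMinOn
    ⟨1, by norm_num⟩ hcont.continuousOn
  have hm₂K' := hm₂K
  rw [mem_Icc] at hm₂K'
  -- Efun t m₂ ≤ Efun t 0
  have hle : Efun t m₂ ≤ Efun t 0 := by
    apply le_of_forall_pos_lt_add
    intro ε hε
    set δ : ℝ := min (ε/3) (1/10) with hδdef
    have hδ0 : 0 < δ := lt_min (by linarith) (by norm_num)
    have hδ1 : δ ≤ ε/3 := min_le_left _ _
    have hδ2 : δ ≤ 1/10 := min_le_right _ _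
    have hs'nS : t + δ ∉ S := fun h => absurd (le_csSup hbdd h) (by linarith)
    have hs'0 : (0:ℝ) ≤ t + δ := by linarith
    have hex : ∃ m ∈ Set.Icc (-1:ℝ) 1,
        (1 - (t + δ)) * (1 - Real.sqrt (1 - m ^ 2)) < (t + δ) * m ^ 5 := by
      by_contra hc
      push_neg at hc
      exact hs'nS ⟨hs'0, hc⟩
    obtain ⟨m, hm, hlt⟩ := hex
    have hs'ub : t + δ ≤ 3/5 := by linarith
    have hsqm := sqrt_bound' hm.1 hm.2
    have hsqnn := Real.sqrt_nonneg (1 - m ^ 2)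
    have hsq1' := hsq1 m hm
    -- m > 0
    have hm0 : 0 < m := by
      by_contra hc
      push_neg at hc
      have hm5 : m ^ 5 ≤ 0 := by
        nlinarith [mul_nonneg (neg_nonneg.2 hc) (sq_nonneg (m ^ 2))]
      nlinarith [mul_nonneg (show (0:ℝ) ≤ 1 - (t + δ) by linarith)
        (show (0:ℝ) ≤ 1 - Real.sqrt (1 - m ^ 2) by linarith)]
    -- m ≥ 0.69
    have key : (1 - (t + δ)) * (m ^ 2) < 2 * (t + δ) * m ^ 5 := by
      nlinarith [mul_le_mul_of_nonneg_left hsqm (show (0:ℝ) ≤ 1 - (t + δ) by linarith)]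
    have hm3 : 1/3 < m ^ 3 := by
      by_contra hc
      push_neg at hc
      have h5 : m ^ 5 ≤ m ^ 2 / 3 := by nlinarith [sq_nonneg m]
      nlinarith [mul_le_mul_of_nonneg_left h5 (show (0:ℝ) ≤ 2 * (t + δ) by linarith), sq_nonneg m]
    have hm69 : (69/100 : ℝ) ≤ m := by
      by_contra hc
      push_neg at hc
      have h2 : m ^ 2 < (69/100 : ℝ) ^ 2 := by nlinarith
      have h3 : m ^ 3 < (69/100 : ℝ) ^ 3 := by nlinarith [mul_pos hm0 hm0]
      norm_num at h3
      linarith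
    have hm1 : m ≤ 1 := hm.2
    have hm5le1 : m ^ 5 ≤ 1 := pow_le_one₀ hm0.le hm1
    -- chain of inequalities
    have h1 : Efun t m₂ ≤ Efun t m := isMinOn_iff.1 hmin m ⟨hm69, hm1⟩
    have h2 : Efun t m < Efun t 0 + 2 * δ := by
      rw [Efun_zero]
      simp only [Efun]
      nlinarith [mul_nonneg hδ0.le hsqnn, mul_le_mul_of_nonneg_left hm5le1 hδ0.le]
    linarith
  refine ⟨t, ⟨by linarith, by linarith⟩, 0, by norm_num, m₂,
    ⟨by linarith [hm₂K'.1], hm₂K'.2⟩, by intro h; rw [← h] at hm₂K'; linarith [hm₂K'.1],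
    fun m hm => hmin0 m hm, ?_⟩
  intro m hm
  exact le_trans (le_trans hle (hmin0 m hm)) le_rfl
end
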